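/- Let {|ψ¹_j⟩}_{j=1,…,N} be linearly independent unit vectors in ℂ^D with Gram matrix Γ₁, let {|x_j⟩}_{j=1,…,N} be an orthonormal set in ℂ^D, and let p = (p_j) be a vector of nonnegative reals such that Γ₁ − Δ(p) is positive semidefinite, where Δ(p) is the diagonal matrix with entries p_j. Then there exists a single linear operator A_S on ℂ^D with A_S†A_S ≤ 1 and complex scalars c_j such that A_S|ψ¹_j⟩ = c_j|x_j⟩ and |c_j|² = p_j for every j. (Unambiguous state discrimination with probabilities p is achievable with a single transformation operator.) -/

import Mathlib

open Matrix BigOperators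
open scoped ComplexOrder

/-- **Duan–Guo condition, sufficiency with a single operator.**  If the unit
vectors `ψ1 j` are linearly independent, `x j` is an orthonormal set,
`p j ≥ 0`, and `Γ₁ - Δ(p)` is positive semidefinite, then there is a single
operator `A_S` with `A_S† A_S ≤ 1` realising unambiguous state discrimination
with probabilities `p`. -/
theorem duan_guo_sufficiency_single_operator {D N : ℕ}
    (ψ1 x : Fin N → (Fin D → ℂ))
    (hψ1unit : ∀ j, star (ψ1 j) ⬝ᵥ ψ1 j = 1)
    (hindep : LinearIndependent ℂ ψ1)
    (hortho : ∀ j' j, star (x j') ⬝ᵥ x j = if j' = j then 1 else 0)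
    (Γ1 : Matrix (Fin N) (Fin N) ℂ)
    (hΓ1 : ∀ j' j, Γ1 j' j = star (ψ1 j') ⬝ᵥ ψ1 j)
    (p : Fin N → ℝ)
    (hp : ∀ j, 0 ≤ p j)
    (hPSD : (Γ1 - Matrix.diagonal (fun j => (p j : ℂ))).PosSemidef) :
    ∃ (AS : Matrix (Fin D) (Fin D) ℂ) (c : Fin N → ℂ),
      (1 - ASᴴ * AS).PosSemidef ∧
      (∀ j, AS *ᵥ ψ1 j = c j • x j) ∧
      (∀ j, ‖c j‖ ^ 2 = p j) := by
  classical
  -- matrices of columns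
  set V : Matrix (Fin D) (Fin N) ℂ := Matrix.of fun i j => ψ1 j i with hV
  set X : Matrix (Fin D) (Fin N) ℂ := Matrix.of fun i j => x j i with hX
  have hΓV : Γ1 = Vᴴ * V := by
    ext j' j
    rw [hΓ1]
    simp [Matrix.mul_apply, Matrix.conjTranspose_apply, dotProduct, hV]
  have hXX : Xᴴ * X = 1 := by
    ext j' j
    have h := hortho j' j
    simp only [dotProduct, Pi.star_apply] at h
    simp only [Matrix.mul_apply, Matrix.conjTranspose_apply, hX, Matrix.of_apply, h,
      Matrix.one_apply]
  -- V *ᵥ a is the linear combination of the ψ1's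
  have hVmul : ∀ a : Fin N → ℂ, V *ᵥ a = ∑ j, a j • ψ1 j := by
    intro a
    funext i
    simp [Matrix.mulVec, dotProduct, hV, Finset.sum_apply, mul_comm]
  -- Γ1 is positive definite
  have hΓpd : Γ1.PosDef := by
    rw [Matrix.posDef_iff_dotProduct_mulVec]
    constructor
    · rw [hΓV]; exact (Matrix.posSemidef_conjTranspose_mul_self V).isHermitian
    · intro a ha
      have hVa : V *ᵥ a ≠ 0 := by
        intro h
        apply ha
        have := (Fintype.linearIndependent_iff.mp hindep) a (by rw [← hVmul]; exact h)
        funext j; exact this j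
      have hq : star a ⬝ᵥ (Γ1 *ᵥ a) = star (V *ᵥ a) ⬝ᵥ (V *ᵥ a) := by
        rw [hΓV, ← Matrix.mulVec_mulVec, Matrix.dotProduct_mulVec, Matrix.star_mulVec,
          ← Matrix.dotProduct_mulVec]
      rw [hq]
      exact Matrix.dotProduct_star_self_pos_iff.mpr hVa
  have hΓunit : IsUnit Γ1.det := by
    simpa [isUnit_iff_ne_zero] using hΓpd.det_pos.ne'
  set G : Matrix (Fin N) (Fin N) ℂ := Γ1⁻¹ with hGdef
  have hGΓ : G * Γ1 = 1 := Matrix.nonsing_inv_mul _ hΓunit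
  have hΓG : Γ1 * G = 1 := Matrix.mul_nonsing_inv _ hΓunit
  have hΓherm : Γ1.IsHermitian := hΓpd.isHermitian
  have hGherm : G.IsHermitian := hΓherm.inv
  -- diagonal matrices
  set Dh : Matrix (Fin N) (Fin N) ℂ :=
    Matrix.diagonal fun j => (Real.sqrt (p j) : ℂ) with hDh
  set Dp : Matrix (Fin N) (Fin N) ℂ := Matrix.diagonal fun j => (p j : ℂ) with hDp
  have hDhherm : Dhᴴ = Dh := by
    rw [hDh, Matrix.diagonal_conjTranspose]
    exact congrArg Matrix.diagonal (funext fun j => by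
      simp [Complex.star_def, Complex.conj_ofReal])
  have hDhsq : Dh * Dh = Dp := by
    rw [hDh, hDp, Matrix.diagonal_mul_diagonal]
    exact congrArg Matrix.diagonal (funext fun j => by
      rw [← Complex.ofReal_mul, Real.mul_self_sqrt (hp j)])
  clear_value V X G Dh Dp
  -- the operator
  set W : Matrix (Fin N) (Fin D) ℂ := G * Vᴴ with hW
  have hWH : Wᴴ = V * G := by
    rw [hW, Matrix.conjTranspose_mul, Matrix.conjTranspose_conjTranspose, hGherm.eq]
  have hWV : W * V = 1 := by
    rw [hW, Matrix.mul_assoc, ← hΓV, hGΓ]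
  clear_value W
  set AS : Matrix (Fin D) (Fin D) ℂ := X * Dh * W with hAS
  have hASV : AS * V = X * Dh := by
    rw [hAS, Matrix.mul_assoc, hWV, Matrix.mul_one]
  clear_value AS
  refine ⟨AS, fun j => (Real.sqrt (p j) : ℂ), ?_, ?_, ?_⟩
  · -- positivity
    have hAA : ASᴴ * AS = Wᴴ * (Dp * W) := by
      rw [hAS]
      calc (X * Dh * W)ᴴ * (X * Dh * W)
          = Wᴴ * (Dhᴴ * ((Xᴴ * X) * (Dh * W))) := by
            simp only [Matrix.conjTranspose_mul, Matrix.mul_assoc]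
        _ = Wᴴ * (Dp * W) := by
            rw [hXX, Matrix.one_mul, hDhherm, ← Matrix.mul_assoc Dh Dh W, hDhsq]
    set P : Matrix (Fin D) (Fin D) ℂ := V * W with hP
    clear_value P
    have hPherm : Pᴴ = P := by
      rw [hP, Matrix.conjTranspose_mul, hWH, Matrix.mul_assoc, ← hW]
    have hPP : P * P = P := by
      rw [hP, Matrix.mul_assoc, ← Matrix.mul_assoc W V W, hWV, Matrix.one_mul]
    have hWΓW : Wᴴ * (Γ1 * W) = P := by
      have h1 : Γ1 * W = Vᴴ := by
        rw [hW, ← Matrix.mul_assoc, hΓG, Matrix.one_mul]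
      rw [h1, ← Matrix.conjTranspose_mul, ← hP, hPherm]
    have key : 1 - ASᴴ * AS = (1 - P) + Wᴴ * (Γ1 - Dp) * W := by
      have h2 : Wᴴ * (Γ1 - Dp) * W = P - ASᴴ * AS := by
        rw [Matrix.mul_sub, Matrix.sub_mul, Matrix.mul_assoc, Matrix.mul_assoc,
          hWΓW, hAA]
      rw [h2]
      abel
    rw [key]
    have hproj : (1 - P).PosSemidef := by
      have h1P : (1 - P)ᴴ = 1 - P := by
        rw [Matrix.conjTranspose_sub, Matrix.conjTranspose_one, hPherm]
      have hsq : (1 - P)ᴴ * (1 - P) = 1 - P := by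
        rw [h1P, Matrix.sub_mul, Matrix.one_mul, Matrix.mul_sub, Matrix.mul_one, hPP]
        abel
      rw [← hsq]
      exact Matrix.posSemidef_conjTranspose_mul_self (1 - P)
    exact hproj.add (hPSD.conjTranspose_mul_mul_same W)
  · -- action on the ψ1's
    intro j
    have h1 : ψ1 j = V *ᵥ Pi.single j 1 := by
      funext i; simp [hV]
    rw [h1, Matrix.mulVec_mulVec, hASV]
    funext i
    simp [Matrix.mul_diagonal, hX, hDh, Pi.smul_apply, mul_comm]
  · intro j
    rw [Complex.norm_real, Real.norm_eq_abs, sq_abs, Real.sq_sqrt (hp j)]
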